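/- arXiv:2506.21455 — 2 statements merged into one kernel-verified Lean document; each statement's English description precedes it below -/
import Mathlib

section
/- Let X ∈ ℂ^{n×n} be invertible with polar decomposition X = UP where U is unitary and P is Hermitian positive definite. Then for every unitary matrix Z, ‖X - U‖_F ≤ ‖X - Z‖_F. -/
open Matrix ComplexOrder

lemma diag_entry_bound {n : ℕ} (W : Matrix (Fin n) (Fin n) ℂ) (hW : Wᴴ * W = 1)
    (i : Fin n) : (W i i).re ≤ 1 := by
  have h1 : ∑ k, Complex.normSq (W k i) = 1 := by
    have h := congrFun (congrFun hW i) i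
    simp only [Matrix.mul_apply, Matrix.one_apply_eq, conjTranspose_apply] at h
    have h' := congrArg Complex.re h
    rw [Complex.re_sum, Complex.one_re] at h'
    rw [← h']
    apply Finset.sum_congr rfl
    intro k _
    simp [Complex.normSq_apply, Complex.mul_re]
  have h2 : Complex.normSq (W i i) ≤ 1 := by
    rw [← h1]
    exact Finset.single_le_sum (f := fun k => Complex.normSq (W k i))
      (fun k _ => Complex.normSq_nonneg _) (Finset.mem_univ i)
  calc (W i i).re ≤ ‖W i i‖ := Complex.re_le_norm _
    _ ≤ 1 := by
        rw [← Real.sqrt_one, Complex.norm_def]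
        exact Real.sqrt_le_sqrt h2

lemma diag_trace_bound {n : ℕ} (W : Matrix (Fin n) (Fin n) ℂ) (hW : Wᴴ * W = 1)
    (d : Fin n → ℝ) (hd : ∀ i, 0 ≤ d i) :
    (Matrix.trace (W * Matrix.diagonal (fun i => (d i : ℂ)))).re ≤ ∑ i, d i := by
  simp only [Matrix.trace, Matrix.diag, Matrix.mul_diagonal]
  rw [Complex.re_sum]
  apply Finset.sum_le_sum
  intro i _
  rw [show (W i i * (d i : ℂ)).re = (W i i).re * d i by simp [Complex.mul_re]]
  calc (W i i).re * d i ≤ 1 * d i :=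
        mul_le_mul_of_nonneg_right (diag_entry_bound W hW i) (hd i)
    _ = d i := one_mul _

lemma key {n : ℕ} (W P : Matrix (Fin n) (Fin n) ℂ) (hW : Wᴴ * W = 1)
    (hP : P.PosSemidef) : (Matrix.trace (W * P)).re ≤ (Matrix.trace P).re := by
  obtain ⟨V, d, hdnn, hVu, hspec⟩ :
      ∃ (V : Matrix (Fin n) (Fin n) ℂ) (d : Fin n → ℝ), (∀ i, 0 ≤ d i) ∧ Vᴴ * V = 1 ∧
        P = V * Matrix.diagonal (fun i => (d i : ℂ)) * Vᴴ := by
    refine ⟨hP.1.eigenvectorUnitary, hP.1.eigenvalues, hP.eigenvalues_nonneg, ?_, ?_⟩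
    · simpa [star_eq_conjTranspose] using
        (Matrix.mem_unitaryGroup_iff'.mp hP.1.eigenvectorUnitary.2)
    · simpa [star_eq_conjTranspose, Function.comp_def] using hP.1.spectral_theorem
  have hVu' : V * Vᴴ = 1 := mul_eq_one_comm.mp hVu
  have hW'u : (Vᴴ * W * V)ᴴ * (Vᴴ * W * V) = 1 := by
    simp only [conjTranspose_mul, conjTranspose_conjTranspose, ← Matrix.mul_assoc]
    rw [show Vᴴ * Wᴴ * V * Vᴴ = Vᴴ * Wᴴ * (V * Vᴴ) from Matrix.mul_assoc _ _ _, hVu',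
      Matrix.mul_one, show Vᴴ * Wᴴ * W = Vᴴ * (Wᴴ * W) from Matrix.mul_assoc _ _ _, hW,
      Matrix.mul_one, hVu]
  have htr1 : Matrix.trace (W * P)
      = Matrix.trace ((Vᴴ * W * V) * Matrix.diagonal (fun i => (d i : ℂ))) := by
    rw [hspec, show W * (V * Matrix.diagonal (fun i => (d i : ℂ)) * Vᴴ)
        = (W * V * Matrix.diagonal (fun i => (d i : ℂ))) * Vᴴ by simp only [Matrix.mul_assoc],
      Matrix.trace_mul_comm]
    simp only [Matrix.mul_assoc]
  have htr2 : (Matrix.trace P).re = ∑ i, d i := by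
    rw [hspec, Matrix.trace_mul_comm, ← Matrix.mul_assoc, hVu, Matrix.one_mul]
    simp [Matrix.trace, Complex.re_sum]
  rw [htr1, htr2]
  exact diag_trace_bound _ hW'u d hdnn

lemma expand_re {n : ℕ} (X Z : Matrix (Fin n) (Fin n) ℂ) (hZ : Zᴴ * Z = 1) :
    (Matrix.trace ((X - Z)ᴴ * (X - Z))).re
      = (Matrix.trace (Xᴴ * X)).re - 2 * (Matrix.trace (Zᴴ * X)).re + n := by
  have hexp : (X - Z)ᴴ * (X - Z) = Xᴴ * X - Xᴴ * Z - Zᴴ * X + Zᴴ * Z := by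
    rw [conjTranspose_sub, Matrix.sub_mul, Matrix.mul_sub, Matrix.mul_sub]
    abel
  rw [hexp, hZ]
  simp only [Matrix.trace_add, Matrix.trace_sub, Matrix.trace_one]
  have h1 : Matrix.trace (Xᴴ * Z) = star (Matrix.trace (Zᴴ * X)) := by
    rw [← Matrix.trace_conjTranspose, conjTranspose_mul, conjTranspose_conjTranspose]
  rw [h1]
  simp [Complex.sub_re, Complex.add_re]
  ring

noncomputable def frobNorm {n : ℕ} (A : Matrix (Fin n) (Fin n) ℂ) : ℝ :=
  Real.sqrt ((Matrix.trace (Aᴴ * A)).re)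

theorem stmt_7 {n : ℕ} (X U P : Matrix (Fin n) (Fin n) ℂ)
    (hXinv : IsUnit X) (hU : Uᴴ * U = 1) (hP : P.PosDef)
    (hpolar : X = U * P) :
    ∀ Z : Matrix (Fin n) (Fin n) ℂ, Zᴴ * Z = 1 →
      frobNorm (X - U) ≤ frobNorm (X - Z) := by
  intro Z hZ
  unfold frobNorm
  apply Real.sqrt_le_sqrt
  rw [expand_re X U hU, expand_re X Z hZ]
  have hgoal : (Matrix.trace (Zᴴ * X)).re ≤ (Matrix.trace (Uᴴ * X)).re := by
    have hUX : Uᴴ * X = P := by rw [hpolar, ← Matrix.mul_assoc, hU, Matrix.one_mul]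
    rw [hUX]
    have hZX : Zᴴ * X = (Zᴴ * U) * P := by rw [hpolar, Matrix.mul_assoc]
    rw [hZX]
    apply key
    · rw [conjTranspose_mul, conjTranspose_conjTranspose]
      calc Uᴴ * Z * (Zᴴ * U) = Uᴴ * (Z * Zᴴ) * U := by simp only [Matrix.mul_assoc]
        _ = 1 := by rw [mul_eq_one_comm.mp hZ, Matrix.mul_one, hU]
    · exact hP.posSemidef
  linarith
end

section
/- Let ρ and σ be Hermitian positive definite, U, W unitary with W·P = 2σUρ for some Hermitian positive definite P (i.e., W is the unitary polar factor of 2σUρ). Then ‖σ - WρW*‖_F² ≤ ‖σ - UρU*‖_F². -/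
open Matrix ComplexOrder

noncomputable def frobSq {n : ℕ} (A : Matrix (Fin n) (Fin n) ℂ) : ℝ :=
  (Matrix.trace (Aᴴ * A)).re

lemma trace_eq_sum {n : ℕ} (A B : Matrix (Fin n) (Fin n) ℂ) :
    Matrix.trace (Aᴴ * B) = ∑ p : Fin n × Fin n, (starRingEnd ℂ) (A p.1 p.2) * B p.1 p.2 := by
  rw [Matrix.trace, Fintype.sum_prod_type]
  simp only [Matrix.diag, Matrix.mul_apply, Matrix.conjTranspose_apply]
  exact Finset.sum_comm

lemma tr_nonneg {n : ℕ} (A : Matrix (Fin n) (Fin n) ℂ) : 0 ≤ (Matrix.trace (Aᴴ * A)).re := by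
  rw [trace_eq_sum, Complex.re_sum]
  apply Finset.sum_nonneg
  intro p _
  rw [show (starRingEnd ℂ) (A p.1 p.2) * A p.1 p.2 = (Complex.normSq (A p.1 p.2) : ℂ) from
    (Complex.normSq_eq_conj_mul_self).symm]
  simp [Complex.normSq_nonneg]

lemma cs {n : ℕ} (A B : Matrix (Fin n) (Fin n) ℂ) :
    (Matrix.trace (Aᴴ * B)).re ≤
      Real.sqrt (Matrix.trace (Aᴴ * A)).re * Real.sqrt (Matrix.trace (Bᴴ * B)).re := by
  classical
  set e : Matrix (Fin n) (Fin n) ℂ → EuclideanSpace ℂ (Fin n × Fin n) :=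
    fun M => (WithLp.equiv 2 _).symm (fun p => M p.1 p.2) with he
  have hinner : ∀ M N : Matrix (Fin n) (Fin n) ℂ,
      (inner ℂ (e M) (e N) : ℂ) = Matrix.trace (Mᴴ * N) := by
    intro M N
    rw [trace_eq_sum, PiLp.inner_apply]
    refine Finset.sum_congr rfl fun p _ => ?_
    simp [he, mul_comm]
  have hnorm : ∀ M : Matrix (Fin n) (Fin n) ℂ,
      ‖e M‖ = Real.sqrt (Matrix.trace (Mᴴ * M)).re := by
    intro M
    rw [EuclideanSpace.norm_eq]
    congr 1
    rw [trace_eq_sum, Complex.re_sum]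
    refine Finset.sum_congr rfl fun p _ => ?_
    symm
    show ((starRingEnd ℂ) (M p.1 p.2) * M p.1 p.2).re = ‖M p.1 p.2‖ ^ 2
    rw [Complex.sq_norm,
      show (starRingEnd ℂ) (M p.1 p.2) * M p.1 p.2 = (Complex.normSq (M p.1 p.2) : ℂ) from
        (Complex.normSq_eq_conj_mul_self).symm]
    simp
  calc (Matrix.trace (Aᴴ * B)).re = (inner ℂ (e A) (e B) : ℂ).re := by rw [hinner]
    _ ≤ ‖(inner ℂ (e A) (e B) : ℂ)‖ := Complex.re_le_norm _
    _ ≤ ‖e A‖ * ‖e B‖ := norm_inner_le_norm _ _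
    _ = _ := by rw [hnorm, hnorm]

section
open MatrixOrder
lemma exists_herm_sqrt {n : ℕ} {A : Matrix (Fin n) (Fin n) ℂ} (hA : A.PosSemidef) :
    ∃ S : Matrix (Fin n) (Fin n) ℂ, Sᴴ = S ∧ S * S = A :=
  ⟨CFC.sqrt A, (CFC.sqrt_nonneg A).posSemidef.isHermitian, CFC.sqrt_mul_sqrt_self A hA.nonneg⟩
end

theorem stmt_19 {n : ℕ} (ρ σ U W P : Matrix (Fin n) (Fin n) ℂ)
    (hρ : ρ.PosDef) (hσ : σ.PosDef)
    (hU : Uᴴ * U = 1) (hU' : U * Uᴴ = 1)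
    (hW : Wᴴ * W = 1) (hW' : W * Wᴴ = 1)
    (hP : P.PosDef) (hWP : W * P = (2 : ℂ) • (σ * U * ρ)) :
    frobSq (σ - W * ρ * Wᴴ) ≤ frobSq (σ - U * ρ * Uᴴ) := by
  obtain ⟨S, hS, hSS⟩ := exists_herm_sqrt hσ.posSemidef
  obtain ⟨R, hR, hRR⟩ := exists_herm_sqrt hρ.posSemidef
  have hρh : ρᴴ = ρ := hρ.isHermitian
  have hσh : σᴴ = σ := hσ.isHermitian
  -- trace identity for the sandwiched objective
  have La : ∀ V : Matrix (Fin n) (Fin n) ℂ,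
      Matrix.trace ((S*V*R)ᴴ * (S*V*R)) = Matrix.trace (σ * (V*ρ*Vᴴ)) := by
    intro V
    have h1 : (S*V*R)ᴴ * (S*V*R) = R * (Vᴴ * (σ * (V * R))) := by
      rw [← hSS]
      simp only [conjTranspose_mul, hS, hR, Matrix.mul_assoc]
    rw [h1, trace_mul_comm, ← hRR]
    simp only [Matrix.mul_assoc]
    rw [trace_mul_comm]
    simp only [Matrix.mul_assoc]
  -- cross term
  have Lc : Matrix.trace ((S*U*R)ᴴ * (S*W*R)) = Matrix.trace (Uᴴ * (σ * (W * ρ))) := by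
    have h1 : (S*U*R)ᴴ * (S*W*R) = R * (Uᴴ * (σ * (W * R))) := by
      rw [← hSS]
      simp only [conjTranspose_mul, hS, hR, Matrix.mul_assoc]
    rw [h1, trace_mul_comm, ← hRR]
    simp only [Matrix.mul_assoc]
  set a : ℝ := (Matrix.trace (σ * (U*ρ*Uᴴ))).re with hadef
  set b : ℝ := (Matrix.trace (σ * (W*ρ*Wᴴ))).re with hbdef
  set c : ℝ := (Matrix.trace (Uᴴ * (σ * (W * ρ)))).re with hcdef
  have ha0 : 0 ≤ a := by
    rw [hadef, ← La U]; exact tr_nonneg _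
  have hb0 : 0 ≤ b := by
    rw [hbdef, ← La W]; exact tr_nonneg _
  -- expansion of the objective
  have expand : ∀ V : Matrix (Fin n) (Fin n) ℂ, Vᴴ * V = 1 →
      frobSq (σ - V*ρ*Vᴴ) = (Matrix.trace (σ*σ)).re + (Matrix.trace (ρ*ρ)).re
        - 2 * (Matrix.trace (σ * (V*ρ*Vᴴ))).re := by
    intro V hV
    set X := V*ρ*Vᴴ with hXdef
    have hXh : Xᴴ = X := by
      rw [hXdef]
      simp [conjTranspose_mul, hρh, Matrix.mul_assoc]
    have hXX : Matrix.trace (X*X) = Matrix.trace (ρ*ρ) := by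
      have : X * X = V * (ρ * (ρ * Vᴴ)) := by
        rw [hXdef]
        simp only [Matrix.mul_assoc]
        rw [show Vᴴ * (V * (ρ * Vᴴ)) = (Vᴴ * V) * (ρ * Vᴴ) by simp only [Matrix.mul_assoc], hV,
          Matrix.one_mul]
      rw [this, trace_mul_comm]
      simp only [Matrix.mul_assoc]
      rw [show ρ * (Vᴴ * V) = ρ * 1 by rw [hV], Matrix.mul_one, trace_mul_comm]
    have hXσ : Matrix.trace (X*σ) = Matrix.trace (σ*X) := trace_mul_comm _ _
    have hmul : (σ - X)ᴴ * (σ - X) = σ*σ - σ*X - X*σ + X*X := by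
      rw [conjTranspose_sub, hσh, hXh, sub_mul, mul_sub, mul_sub]
      abel
    rw [frobSq, hmul, trace_add, trace_sub, trace_sub, hXσ, hXX]
    simp only [Complex.add_re, Complex.sub_re]
    ring
  rw [expand W hW, expand U hU]
  have key : a ≤ b := by
    -- step 1 : 2a ≤ (trace P).re
    obtain ⟨T, hT, hTT⟩ := exists_herm_sqrt hP.posSemidef
    have htrP0 : 0 ≤ (Matrix.trace P).re := by
      have hPT : Matrix.trace P = Matrix.trace (Tᴴ * T) := by rw [hT, hTT]
      rw [hPT]; exact tr_nonneg T
    set Q := Uᴴ * W with hQdef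
    have hQ : Q * Qᴴ = 1 := by
      rw [hQdef, conjTranspose_mul, conjTranspose_conjTranspose]
      calc Uᴴ * W * (Wᴴ * U) = Uᴴ * (W * Wᴴ) * U := by simp only [Matrix.mul_assoc]
        _ = 1 := by rw [hW', Matrix.mul_one, hU]
    have step1 : 2 * a = (Matrix.trace (W * P * Uᴴ)).re := by
      rw [hWP, Matrix.smul_mul, trace_smul]
      have h7 : σ * U * ρ * Uᴴ = σ * (U * ρ * Uᴴ) := by simp only [Matrix.mul_assoc]
      rw [h7, hadef, smul_eq_mul, Complex.mul_re]
      norm_num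
    have step2 : (Matrix.trace (W * P * Uᴴ)).re ≤ (Matrix.trace P).re := by
      have h1 : Matrix.trace (W * P * Uᴴ) = Matrix.trace (Tᴴ * (T * Q)) := by
        rw [trace_mul_cycle, hT, ← Matrix.mul_assoc, hTT, ← hQdef, trace_mul_comm]
      have h2 : Matrix.trace ((T*Q)ᴴ * (T*Q)) = Matrix.trace P := by
        have : (T*Q)ᴴ * (T*Q) = Qᴴ * (P * Q) := by
          rw [← hTT]
          simp only [conjTranspose_mul, hT, Matrix.mul_assoc]
        rw [this, trace_mul_comm Qᴴ (P * Q), Matrix.mul_assoc, hQ, Matrix.mul_one]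
      have h3 : Matrix.trace (Tᴴ * T) = Matrix.trace P := by rw [hT, hTT]
      calc (Matrix.trace (W * P * Uᴴ)).re = (Matrix.trace (Tᴴ * (T * Q))).re := by rw [h1]
        _ ≤ Real.sqrt (Matrix.trace (Tᴴ*T)).re * Real.sqrt (Matrix.trace ((T*Q)ᴴ*(T*Q))).re :=
            cs T (T*Q)
        _ = Real.sqrt (Matrix.trace P).re * Real.sqrt (Matrix.trace P).re := by rw [h2, h3]
        _ = (Matrix.trace P).re := Real.mul_self_sqrt htrP0
    -- step 3 : (trace P).re = 2 * c
    have step3 : (Matrix.trace P).re = 2 * c := by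
      have h1 : Matrix.trace P = Matrix.trace (Wᴴ * (W * P)) := by
        rw [← Matrix.mul_assoc, hW, Matrix.one_mul]
      rw [h1, hWP, Matrix.mul_smul, trace_smul]
      have h2 : Matrix.trace (Wᴴ * (σ * U * ρ)) = Matrix.trace (σ * U * ρ * Wᴴ) :=
        trace_mul_comm _ _
      rw [h2]
      have h3 : (Matrix.trace (σ * U * ρ * Wᴴ)).re = c := by
        have h4 : (starRingEnd ℂ) (Matrix.trace (σ * U * ρ * Wᴴ)) =
            Matrix.trace ((σ * U * ρ * Wᴴ)ᴴ) := (trace_conjTranspose _).symm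
        have h5 : (σ * U * ρ * Wᴴ)ᴴ = W * (ρ * (Uᴴ * σ)) := by
          simp [conjTranspose_mul, hρh, hσh, Matrix.mul_assoc]
        have h6 : Matrix.trace (W * (ρ * (Uᴴ * σ))) = Matrix.trace (Uᴴ * (σ * (W * ρ))) := by
          rw [trace_mul_comm]
          simp only [Matrix.mul_assoc]
          rw [trace_mul_comm]
          simp only [Matrix.mul_assoc]
        have := congrArg Complex.re (h4.trans (by rw [h5, h6]))
        rw [Complex.conj_re] at this
        rw [this, hcdef]
      rw [smul_eq_mul, Complex.mul_re, h3]
      norm_num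
    -- step 4 : c ≤ √a √b
    have step4 : c ≤ Real.sqrt a * Real.sqrt b := by
      have := cs (S*U*R) (S*W*R)
      rw [La U, La W, Lc] at this
      rw [hcdef, hadef, hbdef]
      exact this
    nlinarith [Real.sq_sqrt ha0, Real.sq_sqrt hb0, Real.sqrt_nonneg a, Real.sqrt_nonneg b,
      sq_nonneg (Real.sqrt a - Real.sqrt b), step1, step2, step3, step4]
  linarith [key]
end
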